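/- Let f : S → E be a strictly increasing function from a set of epsilon numbers into the epsilon numbers, and let x be an ordinal with Ep(x) ⊆ S. Then the set of epsilon numbers occurring hereditarily in the Cantor normal form of x[f] equals the image f[Ep(x)]; in particular Ep(x[f]) ⊆ range(f). -/

import Mathlib

open Ordinal

/-- An ordinal is an epsilon number if it is a fixed point of `ω ^ ·`. -/
def IsEpsilon (x : Ordinal.{0}) : Prop := ω ^ x = x

theorem cnf_fst_lt {x : Ordinal.{0}} (h : ¬ ω ^ x = x) {p : Ordinal × Ordinal}
    (hp : p ∈ CNF ω x) : p.1 < x := by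
  have hx : x ≠ 0 := by
    rintro rfl
    simp [Ordinal.CNF.zero_right] at hp
  have h1 : p.1 ≤ Ordinal.log ω x := Ordinal.CNF.fst_le_log hp
  have h2 : Ordinal.log ω x < x := by
    rcases lt_or_eq_of_le (Ordinal.log_le_self ω x) with h' | h'
    · exact h'
    · exfalso
      have hle := Ordinal.opow_log_le_self ω hx
      rw [h'] at hle
      exact h (le_antisymm hle (Ordinal.right_le_opow x one_lt_omega0))
  exact lt_of_le_of_lt h1 h2

open scoped Classical in
/-- The set of epsilon numbers occurring hereditarily in the Cantor normal form of `x`. -/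
noncomputable def Ep (x : Ordinal.{0}) : Set Ordinal.{0} :=
  if h : ω ^ x = x then {x}
  else ⋃ p : {q // q ∈ CNF ω x}, Ep p.1.1
termination_by x
decreasing_by exact cnf_fst_lt h p.2

open scoped Classical in
/-- Simultaneous substitution of the epsilon numbers occurring hereditarily in the
Cantor normal form of `x` by their values under `f`. -/
noncomputable def subst (f : Ordinal.{0} → Ordinal.{0}) (x : Ordinal.{0}) : Ordinal.{0} :=
  if h : ω ^ x = x then f x
  else (((CNF ω x).attach).map (fun p => ω ^ subst f p.1.1 * p.1.2)).sum
termination_by x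
decreasing_by exact cnf_fst_lt h p.2

-- basic unfolding lemmas
theorem eps_ne_zero {x : Ordinal.{0}} (h : ω ^ x = x) : x ≠ 0 := by
  rintro rfl; simp at h

theorem log_lt_self_of_not_eps {x : Ordinal.{0}} (h : ¬ ω ^ x = x) (hx : x ≠ 0) :
    Ordinal.log ω x < x := by
  rcases lt_or_eq_of_le (Ordinal.log_le_self ω x) with h' | h'
  · exact h'
  · exfalso
    have hle := Ordinal.opow_log_le_self ω hx
    rw [h'] at hle
    exact h (le_antisymm hle (Ordinal.right_le_opow x one_lt_omega0))

theorem Ep_of_eps {x : Ordinal.{0}} (h : ω ^ x = x) : Ep x = {x} := by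
  rw [Ep, dif_pos h]

theorem subst_of_eps {f : Ordinal.{0} → Ordinal.{0}} {x : Ordinal.{0}} (h : ω ^ x = x) :
    subst f x = f x := by
  rw [subst, dif_pos h]

theorem CNF_of_eps {x : Ordinal.{0}} (h : ω ^ x = x) : CNF ω x = [(x, 1)] := by
  have hx : x ≠ 0 := eps_ne_zero h
  have hl : Ordinal.log ω x = x := by
    conv_lhs => rw [← h]
    exact Ordinal.log_opow one_lt_omega0 x
  rw [Ordinal.CNF.ne_zero hx, hl, h, Ordinal.div_self hx, Ordinal.mod_self, Ordinal.CNF.zero_right]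

theorem Ep_eq (x : Ordinal.{0}) : Ep x = ⋃ p ∈ CNF ω x, Ep p.1 := by
  by_cases h : ω ^ x = x
  · rw [CNF_of_eps h]
    ext z
    simp [Ep_of_eps h]
  · rw [Ep, dif_neg h]
    ext z
    simp [Set.mem_iUnion]

theorem Ep_exp_subset {x : Ordinal.{0}} {p : Ordinal × Ordinal} (hp : p ∈ CNF ω x) :
    Ep p.1 ⊆ Ep x := by
  rw [Ep_eq x]
  exact Set.subset_biUnion_of_mem (u := fun q => Ep q.1) (s := {q | q ∈ CNF ω x}) hp

theorem Ep_mod_subset {x : Ordinal.{0}} (hx : x ≠ 0) :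
    Ep (x % ω ^ Ordinal.log ω x) ⊆ Ep x := by
  rw [Ep_eq x, Ep_eq (x % ω ^ Ordinal.log ω x), Ordinal.CNF.ne_zero hx]
  refine Set.iUnion₂_subset fun p hp => ?_
  exact Set.subset_biUnion_of_mem (u := fun q => Ep q.1)
    (s := {q | q ∈ (Ordinal.log ω x, x / ω ^ Ordinal.log ω x) :: CNF ω (x % ω ^ Ordinal.log ω x)})
    (List.mem_cons_of_mem _ hp)

section
variable {S : Set Ordinal.{0}} {f : Ordinal.{0} → Ordinal.{0}}

theorem mem_Ep_self {x : Ordinal.{0}} (h : ω ^ x = x) : x ∈ Ep x := by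
  rw [Ep_of_eps h]; rfl

theorem subst_sum (hfE : ∀ e ∈ S, IsEpsilon (f e)) {x : Ordinal.{0}} (hx : Ep x ⊆ S) :
    subst f x = ((CNF ω x).map (fun p => ω ^ subst f p.1 * p.2)).sum := by
  by_cases h : ω ^ x = x
  · rw [subst_of_eps h, CNF_of_eps h]
    simp only [List.map_cons, List.map_nil, List.sum_cons, List.sum_nil, add_zero, mul_one]
    rw [subst_of_eps h]
    exact (hfE x (hx (mem_Ep_self h))).symm
  · rw [subst, dif_neg h]
    congr 1
    exact List.attach_map_val (l := CNF ω x) (f := fun p => ω ^ subst f p.1 * p.2)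

theorem subst_zero : subst f 0 = 0 := by
  rw [subst, dif_neg (by simp), Ordinal.CNF.zero_right]
  simp

theorem subst_decomp (hfE : ∀ e ∈ S, IsEpsilon (f e)) {x : Ordinal.{0}} (hx : Ep x ⊆ S)
    (h0 : x ≠ 0) :
    subst f x = ω ^ subst f (Ordinal.log ω x) * (x / ω ^ Ordinal.log ω x)
      + subst f (x % ω ^ Ordinal.log ω x) := by
  rw [subst_sum hfE hx, Ordinal.CNF.ne_zero h0, List.map_cons, List.sum_cons,
    ← subst_sum hfE ((Ep_mod_subset h0).trans hx)]

theorem subst_ne_zero (hfE : ∀ e ∈ S, IsEpsilon (f e)) {x : Ordinal.{0}} (hx : Ep x ⊆ S)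
    (h0 : x ≠ 0) : subst f x ≠ 0 := by
  rw [subst_decomp hfE hx h0]
  have : 0 < ω ^ subst f (Ordinal.log ω x) * (x / ω ^ Ordinal.log ω x) :=
    mul_pos (Ordinal.opow_pos _ omega0_pos) (Ordinal.div_opow_log_pos ω h0)
  exact ne_of_gt (this.trans_le (le_self_add))

theorem sum_lt_opow {l : List Ordinal.{0}} {T : Ordinal.{0}} (h : ∀ a ∈ l, a < ω ^ T) :
    l.sum < ω ^ T := by
  induction l with
  | nil => simpa using Ordinal.opow_pos T omega0_pos
  | cons a l ih =>
    rw [List.sum_cons]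
    exact Ordinal.principal_add_omega0_opow T (h a (List.mem_cons_self))
      (ih fun b hb => h b (List.mem_cons_of_mem a hb))

theorem term_lt {a T c : Ordinal.{0}} (h : a < T) (hc : c < ω) : ω ^ a * c < ω ^ T := by
  calc ω ^ a * c < ω ^ a * ω := mul_lt_mul_of_pos_left hc (Ordinal.opow_pos a omega0_pos)
    _ = ω ^ Order.succ a := (Ordinal.opow_succ ω a).symm
    _ ≤ ω ^ T := Ordinal.opow_le_opow_right omega0_pos (Order.succ_le_of_lt h)

theorem subst_lt_opow (hfE : ∀ e ∈ S, IsEpsilon (f e)) {x e : Ordinal.{0}} (hx : Ep x ⊆ S)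
    (h : ∀ p ∈ CNF ω x, subst f p.1 < subst f e) : subst f x < ω ^ subst f e := by
  rw [subst_sum hfE hx]
  apply sum_lt_opow
  intro a ha
  obtain ⟨p, hp, rfl⟩ := List.mem_map.1 ha
  exact term_lt (h p hp) (Ordinal.CNF.snd_lt one_lt_omega0 hp)

end

section
variable {S : Set Ordinal.{0}} {f : Ordinal.{0} → Ordinal.{0}}

theorem subst_mono (hfE : ∀ e ∈ S, IsEpsilon (f e)) (hf : StrictMonoOn f S) :
    ∀ b, Ep b ⊆ S → ∀ a, Ep a ⊆ S → a < b → subst f a < subst f b := by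
  intro b
  induction b using Ordinal.induction with
  | h b IHb =>
  intro hbS a
  induction a using Ordinal.induction with
  | h a IHa =>
  intro haS hab
  by_cases hb : ω ^ b = b
  · -- b is an epsilon number
    have hbSm : b ∈ S := hbS (mem_Ep_self hb)
    have hfb : ω ^ f b = f b := hfE b hbSm
    rw [subst_of_eps hb]
    by_cases ha : ω ^ a = a
    · rw [subst_of_eps ha]
      exact hf (haS (mem_Ep_self ha)) hbSm hab
    · have key : subst f a < ω ^ subst f b := by
        apply subst_lt_opow hfE haS
        intro p hp
        exact IHa p.1 (cnf_fst_lt ha hp) ((Ep_exp_subset hp).trans haS)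
          ((cnf_fst_lt ha hp).trans hab)
      rwa [subst_of_eps hb, hfb] at key
  · -- b is not an epsilon number
    have hb0 : b ≠ 0 := fun h => by subst h; exact absurd hab (not_lt_zero)
    have heb : Ordinal.log ω b < b := log_lt_self_of_not_eps hb hb0
    have hheadmem : ((Ordinal.log ω b, b / ω ^ Ordinal.log ω b) : Ordinal × Ordinal) ∈ CNF ω b := by
      rw [Ordinal.CNF.ne_zero hb0]
      exact List.mem_cons_self
    have hEe : Ep (Ordinal.log ω b) ⊆ S := (Ep_exp_subset hheadmem).trans hbS
    have hEr : Ep (b % ω ^ Ordinal.log ω b) ⊆ S := (Ep_mod_subset hb0).trans hbS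
    have hdecb := subst_decomp hfE hbS hb0
    by_cases ha0 : a = 0
    · subst ha0
      rw [subst_zero, hdecb]
      have : 0 < ω ^ subst f (Ordinal.log ω b) * (b / ω ^ Ordinal.log ω b) :=
        mul_pos (Ordinal.opow_pos _ omega0_pos) (Ordinal.div_opow_log_pos ω hb0)
      exact this.trans_le (le_self_add)
    · have hdeca := subst_decomp hfE haS ha0
      have hde : Ordinal.log ω a ≤ Ordinal.log ω b := Ordinal.log_mono_right ω hab.le
      rcases lt_or_eq_of_le hde with hlt | heq
      · -- log a < log b
        have h1 : subst f a < ω ^ subst f (Ordinal.log ω b) := by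
          apply subst_lt_opow hfE haS
          intro p hp
          exact IHb (Ordinal.log ω b) heb hEe p.1 ((Ep_exp_subset hp).trans haS)
            ((Ordinal.CNF.fst_le_log hp).trans_lt hlt)
        refine h1.trans_le ?_
        rw [hdecb]
        calc ω ^ subst f (Ordinal.log ω b)
            = ω ^ subst f (Ordinal.log ω b) * 1 := (mul_one _).symm
          _ ≤ ω ^ subst f (Ordinal.log ω b) * (b / ω ^ Ordinal.log ω b) :=
              mul_le_mul_right (Order.one_le_iff_pos.2 (Ordinal.div_opow_log_pos ω hb0)) _
          _ ≤ _ := le_self_add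
      · -- log a = log b
        rw [heq] at hdeca
        have hEsa : Ep (a % ω ^ Ordinal.log ω b) ⊆ S := by
          rw [← heq]; exact (Ep_mod_subset ha0).trans haS
        have hke : a / ω ^ Ordinal.log ω b ≤ b / ω ^ Ordinal.log ω b :=
          (Ordinal.le_div (Ordinal.opow_ne_zero _ omega0_ne_zero)).2
            ((Ordinal.mul_div_le a _).trans hab.le)
        have hsub : subst f (a % ω ^ Ordinal.log ω b) < ω ^ subst f (Ordinal.log ω b) := by
          apply subst_lt_opow hfE hEsa
          intro p hp
          have hs0 : a % ω ^ Ordinal.log ω b ≠ 0 := by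
            rintro h
            rw [h, Ordinal.CNF.zero_right] at hp
            cases hp
          have hplt : p.1 < Ordinal.log ω b :=
            (Ordinal.CNF.fst_le_log hp).trans_lt
              ((Ordinal.lt_opow_iff_log_lt one_lt_omega0 hs0).1
                (Ordinal.mod_lt a (Ordinal.opow_ne_zero _ omega0_ne_zero)))
          exact IHb (Ordinal.log ω b) heb hEe p.1
            ((Ep_exp_subset hp).trans hEsa) hplt
        rcases lt_or_eq_of_le hke with hklt | hkeq
        · -- coefficient of a is smaller
          rw [hdeca, hdecb]
          calc ω ^ subst f (Ordinal.log ω b) * (a / ω ^ Ordinal.log ω b)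
                + subst f (a % ω ^ Ordinal.log ω b)
              < ω ^ subst f (Ordinal.log ω b) * (a / ω ^ Ordinal.log ω b)
                + ω ^ subst f (Ordinal.log ω b) := add_lt_add_right hsub _
            _ = ω ^ subst f (Ordinal.log ω b) * Order.succ (a / ω ^ Ordinal.log ω b) :=
                (Ordinal.mul_succ _ _).symm
            _ ≤ ω ^ subst f (Ordinal.log ω b) * (b / ω ^ Ordinal.log ω b) :=
                mul_le_mul_right (Order.succ_le_of_lt hklt) _
            _ ≤ _ := le_self_add
        · -- coefficients equal, compare remainders
          have hsr : a % ω ^ Ordinal.log ω b < b % ω ^ Ordinal.log ω b := by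
            have hda := Ordinal.div_add_mod a (ω ^ Ordinal.log ω b)
            have hdb := Ordinal.div_add_mod b (ω ^ Ordinal.log ω b)
            rw [hkeq] at hda
            have h' := hab
            conv_lhs at h' => rw [← hda]
            conv_rhs at h' => rw [← hdb]
            exact (add_lt_add_iff_left _).1 h'
          rw [hdeca, hdecb, hkeq]
          exact add_lt_add_right
            (IHb (b % ω ^ Ordinal.log ω b)
              ((Ordinal.mod_lt b (Ordinal.opow_ne_zero _ omega0_ne_zero)).trans_le
                (Ordinal.opow_log_le_self ω hb0))
              hEr (a % ω ^ Ordinal.log ω b) hEsa hsr) _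

end

section
variable {S : Set Ordinal.{0}} {f : Ordinal.{0} → Ordinal.{0}}

theorem CNF_subst (hfE : ∀ e ∈ S, IsEpsilon (f e)) (hf : StrictMonoOn f S) :
    ∀ x : Ordinal.{0}, Ep x ⊆ S →
      CNF ω (subst f x) = (CNF ω x).map (fun p => (subst f p.1, p.2)) := by
  intro x
  induction x using Ordinal.induction with
  | h x IH =>
  intro hx
  by_cases h0 : x = 0
  · subst h0
    rw [subst_zero]
    simp
  · have hheadmem : ((Ordinal.log ω x, x / ω ^ Ordinal.log ω x) : Ordinal × Ordinal)
        ∈ CNF ω x := by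
      rw [Ordinal.CNF.ne_zero h0]
      exact List.mem_cons_self
    have hEe : Ep (Ordinal.log ω x) ⊆ S := (Ep_exp_subset hheadmem).trans hx
    have hEr : Ep (x % ω ^ Ordinal.log ω x) ⊆ S := (Ep_mod_subset h0).trans hx
    have hR : subst f (x % ω ^ Ordinal.log ω x) < ω ^ subst f (Ordinal.log ω x) := by
      apply subst_lt_opow hfE hEr
      intro p hp
      have hr0 : x % ω ^ Ordinal.log ω x ≠ 0 := by
        rintro h
        rw [h, Ordinal.CNF.zero_right] at hp
        cases hp
      have hplt : p.1 < Ordinal.log ω x :=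
        (Ordinal.CNF.fst_le_log hp).trans_lt
          ((Ordinal.lt_opow_iff_log_lt one_lt_omega0 hr0).1
            (Ordinal.mod_lt x (Ordinal.opow_ne_zero _ omega0_ne_zero)))
      exact subst_mono hfE hf _ hEe p.1 ((Ep_exp_subset hp).trans hEr) hplt
    have hc0 : x / ω ^ Ordinal.log ω x ≠ 0 := (Ordinal.div_opow_log_pos ω h0).ne'
    have hcω : x / ω ^ Ordinal.log ω x < ω := Ordinal.div_opow_log_lt x one_lt_omega0
    set T := subst f (Ordinal.log ω x) with hT
    set c := x / ω ^ Ordinal.log ω x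
    set R := subst f (x % ω ^ Ordinal.log ω x) with hRdef
    have hne : ω ^ T * c + R ≠ 0 := by
      have : 0 < ω ^ T * c :=
        mul_pos (Ordinal.opow_pos _ omega0_pos) (pos_iff_ne_zero.2 hc0)
      exact ne_of_gt (this.trans_le (le_self_add))
    have hlog : Ordinal.log ω (ω ^ T * c + R) = T := by
      rw [Ordinal.log_opow_mul_add one_lt_omega0 hc0 hR, Ordinal.log_eq_zero hcω, add_zero]
    have hdiv : (ω ^ T * c + R) / ω ^ T = c := by
      rw [Ordinal.mul_add_div _ (Ordinal.opow_ne_zero _ omega0_ne_zero),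
        Ordinal.div_eq_zero_of_lt hR, add_zero]
    have hmod : (ω ^ T * c + R) % ω ^ T = R := by
      rw [Ordinal.mul_add_mod_self, Ordinal.mod_eq_of_lt hR]
    rw [subst_decomp hfE hx h0, ← hT, ← hRdef, Ordinal.CNF.ne_zero hne, hlog, hdiv, hmod,
      hRdef, IH _ (Ordinal.mod_opow_log_lt_self ω h0) hEr]
    conv_rhs => rw [Ordinal.CNF.ne_zero h0, List.map_cons]

theorem Ep_subst (hfE : ∀ e ∈ S, IsEpsilon (f e)) (hf : StrictMonoOn f S) :
    ∀ x : Ordinal.{0}, Ep x ⊆ S → Ep (subst f x) = f '' Ep x := by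
  intro x
  induction x using Ordinal.induction with
  | h x IH =>
  intro hx
  by_cases h : ω ^ x = x
  · rw [subst_of_eps h, Ep_of_eps (hfE x (hx (mem_Ep_self h))), Ep_of_eps h,
      Set.image_singleton]
  · calc Ep (subst f x) = ⋃ q ∈ CNF ω (subst f x), Ep q.1 := Ep_eq _
      _ = ⋃ p ∈ CNF ω x, Ep (subst f p.1) := by
          rw [CNF_subst hfE hf x hx]
          ext z
          simp only [Set.mem_iUnion, exists_prop, List.mem_map]
          constructor
          · rintro ⟨q, ⟨p, hp, rfl⟩, hz⟩
            exact ⟨p, hp, hz⟩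
          · rintro ⟨p, hp, hz⟩
            exact ⟨_, ⟨p, hp, rfl⟩, hz⟩
      _ = ⋃ p ∈ CNF ω x, f '' Ep p.1 :=
          Set.iUnion₂_congr fun p hp => IH p.1 (cnf_fst_lt h hp) ((Ep_exp_subset hp).trans hx)
      _ = f '' ⋃ p ∈ CNF ω x, Ep p.1 := (Set.image_iUnion₂ f _).symm
      _ = f '' Ep x := by rw [← Ep_eq]

end

theorem stmt3 (S : Set Ordinal.{0}) (f : Ordinal → Ordinal)
    (hS : ∀ e ∈ S, IsEpsilon e) (hfE : ∀ e ∈ S, IsEpsilon (f e))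
    (hf : StrictMonoOn f S)
    (x : Ordinal) (hx : Ep x ⊆ S) :
    Ep (subst f x) = f '' (Ep x) ∧ Ep (subst f x) ⊆ Set.range f := by
  refine ⟨Ep_subst hfE hf x hx, ?_⟩
  rw [Ep_subst hfE hf x hx]
  exact Set.image_subset_range f _
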